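/- Define a_0 = 1/2 and, for each integer i ≥ 1, a_i = (1 − 2^{1−2i})·ζ(2i), where ζ is the Riemann zeta function. Then there exists a constant C > 0 such that for every integer k ≥ 1, the series Σ_{L=1}^∞ (L+k)(a_{L+k} − a_L) converges and satisfies Σ_{L=1}^∞ (L+k)(a_{L+k} − a_L) ≤ C·k. -/

import Mathlib

open Complex Real

lemma zeta_real_bound (i : ℕ) (hi : 1 ≤ i) :
    ∃ z : ℝ, riemannZeta (2 * (i : ℂ)) = (z : ℂ) ∧ 1 ≤ z ∧ z ≤ 1 + 4 * (1/4 : ℝ) ^ i := by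
  obtain ⟨j, rfl⟩ : ∃ j, i = j + 1 := ⟨i - 1, by omega⟩
  set i := j + 1 with hij
  have h2i : 1 < 2 * i := by omega
  set F : ℕ → ℝ := fun n => 1 / (n : ℝ) ^ (2 * i) with hF
  have hsum : Summable F := (Real.summable_one_div_nat_pow).mpr (by omega)
  refine ⟨∑' n, F n, ?_, ?_, ?_⟩
  · have : (2 * ((i : ℕ) : ℂ)) = ((2 * i : ℕ) : ℂ) := by push_cast; ring
    rw [this, zeta_nat_eq_tsum_of_gt_one h2i, Complex.ofReal_tsum]
    congr 1; ext n; push_cast [hF]; ring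
  · have h1 : F 1 = 1 := by simp [hF]
    calc (1:ℝ) = F 1 := h1.symm
    _ ≤ ∑' n, F n := Summable.le_tsum hsum 1 fun m _ => by positivity
  · -- split off first two terms
    have hs : HasSum (fun n : ℕ => (1:ℝ)/(n:ℝ)^2)
        ((π^2/6 - 1) + ∑ m ∈ Finset.range 2, (1:ℝ)/(m:ℝ)^2) := by
      convert hasSum_zeta_two using 1
      simp [Finset.sum_range_succ]
    have htail2' := (hasSum_nat_add_iff (f := fun n : ℕ => (1:ℝ)/(n:ℝ)^2) 2).mpr hs
    have htail2 : HasSum (fun n : ℕ => 1 / ((n : ℝ) + 2) ^ 2) (π ^ 2 / 6 - 1) := by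
      convert htail2' using 2 with n
      · rfl
      · push_cast; ring_nf
    have hptw : ∀ n : ℕ, 1 / ((n : ℝ) + 2) ^ (2 * i) ≤
        (1/4 : ℝ) ^ j * (1 / ((n : ℝ) + 2) ^ 2) := by
      intro n
      have hx : (2 : ℝ) ≤ (n : ℝ) + 2 := by
        have : (0:ℝ) ≤ (n:ℝ) := Nat.cast_nonneg n
        linarith
      have hx0 : (0 : ℝ) < (n : ℝ) + 2 := by linarith
      have hsq : (4 : ℝ) ≤ ((n : ℝ) + 2) ^ 2 := by nlinarith
      have h1 : ((n:ℝ)+2) ^ (2 * i) = ((n:ℝ)+2) ^ 2 * (((n:ℝ)+2) ^ 2) ^ j := by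
        rw [← pow_mul, ← pow_add]; congr 1; omega
      have h2 : (4 : ℝ) ^ j ≤ (((n:ℝ)+2) ^ 2) ^ j :=
        pow_le_pow_left₀ (by norm_num) hsq _
      have hre : (1/4 : ℝ) ^ j * (1 / ((n : ℝ) + 2) ^ 2)
          = 1 / (4 ^ j * ((n:ℝ)+2) ^ 2) := by
        rw [div_pow, one_pow, div_mul_div_comm, one_mul]
      rw [h1, hre]
      apply one_div_le_one_div_of_le (by positivity)
      calc (4:ℝ)^j * ((n:ℝ)+2)^2 ≤ (((n:ℝ)+2)^2)^j * ((n:ℝ)+2)^2 :=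
            mul_le_mul_of_nonneg_right h2 (by positivity)
      _ = ((n:ℝ)+2)^2 * (((n:ℝ)+2)^2)^j := by ring
    have hsum2 : Summable (fun n : ℕ => (1/4 : ℝ) ^ j * (1 / ((n : ℝ) + 2) ^ 2)) :=
      htail2.summable.mul_left _
    have hsumtail : Summable (fun n : ℕ => 1 / ((n : ℝ) + 2) ^ (2 * i)) :=
      Summable.of_nonneg_of_le (fun n => by positivity) hptw hsum2
    have htsum_tail : ∑' n : ℕ, 1 / ((n : ℝ) + 2) ^ (2 * i) ≤ 4 * (1/4 : ℝ) ^ i := by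
      calc ∑' n : ℕ, 1 / ((n : ℝ) + 2) ^ (2 * i)
          ≤ ∑' n : ℕ, (1/4 : ℝ) ^ j * (1 / ((n : ℝ) + 2) ^ 2) :=
            Summable.tsum_le_tsum hptw hsumtail hsum2
        _ = (1/4 : ℝ) ^ j * (π ^ 2 / 6 - 1) := by
            rw [tsum_mul_left, htail2.tsum_eq]
        _ ≤ (1/4 : ℝ) ^ j * 1 := by
            have hπ : π ^ 2 ≤ 12 := by nlinarith [Real.pi_lt_d2, Real.pi_pos]
            have h4 : (0:ℝ) ≤ (1/4 : ℝ) ^ j := by positivity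
            apply mul_le_mul_of_nonneg_left _ h4
            linarith
        _ = 4 * (1/4 : ℝ) ^ i := by rw [mul_one, hij, pow_succ]; ring
    rw [Summable.tsum_eq_zero_add hsum, Summable.tsum_eq_zero_add (by
      exact (summable_nat_add_iff 1).mpr hsum)]
    have hF0 : F 0 = 0 := by simp [hF, zero_pow (by omega : 2 * i ≠ 0)]
    have hF1 : F (0 + 1) = 1 := by simp [hF]
    have hFe : ∀ n : ℕ, F (n + 1 + 1) = 1 / ((n : ℝ) + 2) ^ (2 * i) := by
      intro n; simp only [hF]; push_cast; ring_nf
    rw [hF0, hF1]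
    simp only [hFe]
    linarith [htsum_tail]

lemma a_near_one (a : ℕ → ℝ)
    (hi : ∀ i : ℕ, 1 ≤ i →
      (a i : ℂ) = (1 - (2 : ℂ) ^ ((1 : ℂ) - 2 * (i : ℂ))) * riemannZeta (2 * (i : ℂ)))
    (i : ℕ) (h1 : 1 ≤ i) : |a i - 1| ≤ 8 * (1/4 : ℝ) ^ i := by
  obtain ⟨z, hz, hz1, hz2⟩ := zeta_real_bound i h1
  have hpow : (2 : ℂ) ^ ((1 : ℂ) - 2 * (i : ℂ)) = ((2 * (1/4 : ℝ) ^ i : ℝ) : ℂ) := by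
    have he : ((1 : ℂ) - 2 * (i : ℂ)) = (((1 - 2 * (i : ℤ)) : ℤ) : ℂ) := by push_cast; ring
    rw [he, Complex.cpow_intCast]
    have : (2 : ℂ) = ((2 : ℝ) : ℂ) := by norm_num
    rw [this, ← Complex.ofReal_zpow]
    congr 1
    rw [zpow_sub₀ (by norm_num : (2:ℝ) ≠ 0), zpow_one]
    rw [show (2 : ℤ) * (i : ℤ) = ((2 * i : ℕ) : ℤ) by push_cast; ring, zpow_natCast]
    rw [pow_mul]
    norm_num [div_pow]
    ring
  have ha : a i = (1 - 2 * (1/4 : ℝ) ^ i) * z := by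
    have h := hi i h1
    rw [hz, hpow] at h
    have h2 : ((a i : ℝ) : ℂ) = (((1 - 2 * (1/4 : ℝ) ^ i) * z : ℝ) : ℂ) := by
      rw [h]; push_cast; ring
    exact_mod_cast h2
  have hx1 : (0:ℝ) < (1/4 : ℝ) ^ i := by positivity
  have hx2 : (1/4 : ℝ) ^ i ≤ 1/4 := by
    calc (1/4:ℝ)^i ≤ (1/4:ℝ)^1 := pow_le_pow_of_le_one (by norm_num) (by norm_num) h1
    _ = 1/4 := pow_one _
  rw [abs_le]
  constructor <;> nlinarith

theorem stmt4 (a : ℕ → ℝ)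
    (h0 : a 0 = 1 / 2)
    (hi : ∀ i : ℕ, 1 ≤ i →
      (a i : ℂ) = (1 - (2 : ℂ) ^ ((1 : ℂ) - 2 * (i : ℂ))) * riemannZeta (2 * (i : ℂ))) :
    ∃ C : ℝ, 0 < C ∧ ∀ k : ℕ, 1 ≤ k →
      Summable (fun L : ℕ => (((L + 1) + k : ℕ) : ℝ) * (a ((L + 1) + k) - a (L + 1))) ∧
      ∑' L : ℕ, (((L + 1) + k : ℕ) : ℝ) * (a ((L + 1) + k) - a (L + 1)) ≤ C * k := by
  refine ⟨13, by norm_num, fun k hk => ?_⟩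
  set f : ℕ → ℝ := fun L => (((L + 1) + k : ℕ) : ℝ) * (a ((L + 1) + k) - a (L + 1)) with hf
  set g : ℕ → ℝ := fun L => 4 * ((L : ℝ) + 1 + k) * (1/4 : ℝ) ^ L with hg
  have hr : ‖(1/4 : ℝ)‖ < 1 := by
    rw [Real.norm_eq_abs, _root_.abs_of_nonneg (by norm_num : (0:ℝ) ≤ 1/4)]; norm_num
  have h1 : Summable (fun L : ℕ => (L : ℝ) * (1/4 : ℝ) ^ L) := by
    simpa using summable_pow_mul_geometric_of_norm_lt_one 1 hr
  have h2 : Summable (fun L : ℕ => (1/4 : ℝ) ^ L) :=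
    summable_geometric_of_lt_one (by norm_num) (by norm_num)
  have hge : g = fun L : ℕ => 4 * ((L : ℝ) * (1/4 : ℝ) ^ L) + (4 + 4 * (k:ℝ)) * (1/4 : ℝ) ^ L := by
    funext L; simp only [hg]; ring
  have hgsum : Summable g := by
    rw [hge]; exact ((h1.mul_left 4).add (h2.mul_left _))
  have habs : ∀ L : ℕ, |f L| ≤ g L := by
    intro L
    have hb1 := a_near_one a hi (L + 1 + k) (by omega)
    have hb2 := a_near_one a hi (L + 1) (by omega)
    have hmono : (1/4 : ℝ) ^ (L + 1 + k) ≤ (1/4 : ℝ) ^ (L + 1) :=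
      pow_le_pow_of_le_one (by norm_num) (by norm_num) (by omega)
    have hdiff : |a (L + 1 + k) - a (L + 1)| ≤ 4 * (1/4 : ℝ) ^ L := by
      have h3 : |a (L + 1 + k) - a (L + 1)| ≤ |a (L+1+k) - 1| + |a (L+1) - 1| := by
        calc |a (L + 1 + k) - a (L + 1)| = |(a (L+1+k) - 1) - (a (L+1) - 1)| := by
              rw [sub_sub_sub_cancel_right]
        _ ≤ _ := abs_sub _ _
      have hps : (1/4:ℝ) ^ (L+1) = (1/4) * (1/4:ℝ)^L := by rw [pow_succ]; ring
      calc |a (L + 1 + k) - a (L + 1)| ≤ |a (L+1+k) - 1| + |a (L+1) - 1| := h3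
      _ ≤ 8 * (1/4:ℝ)^(L+1+k) + 8 * (1/4:ℝ)^(L+1) := add_le_add hb1 hb2
      _ ≤ 8 * (1/4:ℝ)^(L+1) + 8 * (1/4:ℝ)^(L+1) := by nlinarith
      _ = 4 * (1/4:ℝ)^L := by rw [hps]; ring
    have hcast : (((L + 1) + k : ℕ) : ℝ) = (L : ℝ) + 1 + k := by push_cast; ring
    calc |f L| = (((L + 1) + k : ℕ) : ℝ) * |a (L + 1 + k) - a (L + 1)| := by
          rw [hf, abs_mul, _root_.abs_of_nonneg (by positivity : (0:ℝ) ≤ (((L + 1) + k : ℕ) : ℝ))]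
    _ ≤ (((L + 1) + k : ℕ) : ℝ) * (4 * (1/4:ℝ)^L) := by
          apply mul_le_mul_of_nonneg_left hdiff (by positivity)
    _ = g L := by rw [hcast, hg]; ring
  have hfsum : Summable f :=
    Summable.of_norm_bounded hgsum (fun L => by rw [Real.norm_eq_abs]; exact habs L)
  refine ⟨hfsum, ?_⟩
  have e1 : ∑' L : ℕ, (L : ℝ) * (1/4 : ℝ) ^ L = 4/9 := by
    rw [tsum_coe_mul_geometric_of_norm_lt_one hr]; norm_num
  have e2 : ∑' L : ℕ, (1/4 : ℝ) ^ L = 4/3 :=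
    by rw [tsum_geometric_of_lt_one (by norm_num) (by norm_num)]; norm_num
  have hg_tsum : ∑' L, g L = 16/9 + (4 + 4 * (k:ℝ)) * (4/3) := by
    rw [hge, Summable.tsum_add (h1.mul_left 4) (h2.mul_left _), tsum_mul_left, tsum_mul_left, e1, e2]
    ring
  have hle : ∑' L, f L ≤ ∑' L, g L :=
    Summable.tsum_le_tsum (fun L => (le_abs_self _).trans (habs L)) hfsum hgsum
  have hk1 : (1 : ℝ) ≤ (k : ℝ) := by exact_mod_cast hk
  calc ∑' L, f L ≤ 16/9 + (4 + 4 * (k:ℝ)) * (4/3) := hg_tsum ▸ hle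
  _ ≤ 13 * k := by nlinarith
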